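/- For every r > 0 one has i₀(r)·i₁'(r) - i₀'(r)·i₁(r) > 0, i.e. the ratio i₁/i₀ of modified spherical Bessel functions of the first kind is strictly increasing on (0,∞). -/

import Mathlib

noncomputable def i0 : ℝ → ℝ := fun r => Real.sinh r / r

noncomputable def i1 : ℝ → ℝ := fun r => (r * Real.cosh r - Real.sinh r) / r ^ 2

lemma hd0 (r : ℝ) (hr : r ≠ 0) :
    HasDerivAt i0 ((Real.cosh r * r - Real.sinh r * 1) / r ^ 2) r := by
  exact (Real.hasDerivAt_sinh r).div (hasDerivAt_id r) hr

lemma hd1 (r : ℝ) (hr : r ≠ 0) :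
    HasDerivAt i1
      (((Real.cosh r * 1 + Real.sinh r * r - Real.cosh r) * r ^ 2 -
        (r * Real.cosh r - Real.sinh r) * (2 * r)) / (r ^ 2) ^ 2) r := by
  have hnum : HasDerivAt (fun r : ℝ => r * Real.cosh r - Real.sinh r)
      (Real.cosh r * 1 + Real.sinh r * r - Real.cosh r) r := by
    have := ((hasDerivAt_id' r).mul (Real.hasDerivAt_cosh r)).sub (Real.hasDerivAt_sinh r)
    refine this.congr_deriv ?_
    ring
  have hden : HasDerivAt (fun r : ℝ => r ^ 2) (2 * r) r := by
    simpa using hasDerivAt_pow 2 r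
  have := hnum.div hden (pow_ne_zero 2 hr)
  exact this

theorem stmt_4 : ∀ r : ℝ, 0 < r →
    0 < i0 r * deriv i1 r - deriv i0 r * i1 r := by
  intro r hr
  have hr0 : r ≠ 0 := ne_of_gt hr
  rw [(hd0 r hr0).deriv, (hd1 r hr0).deriv]
  have hs : r < Real.sinh r := Real.self_lt_sinh_iff.mpr hr
  have key : i0 r * (((Real.cosh r * 1 + Real.sinh r * r - Real.cosh r) * r ^ 2 -
        (r * Real.cosh r - Real.sinh r) * (2 * r)) / (r ^ 2) ^ 2) -
      ((Real.cosh r * r - Real.sinh r * 1) / r ^ 2) * i1 r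
      = (Real.sinh r ^ 2 - r ^ 2) / r ^ 4 := by
    simp only [i0, i1]
    have hc : Real.cosh r ^ 2 = Real.sinh r ^ 2 + 1 := Real.cosh_sq r
    field_simp
    linear_combination (-(r:ℝ)^2) * hc
  rw [key]
  exact div_pos (by nlinarith) (by positivity)
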